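/- Let C be the circle in ℝ² with center (7/4, 1) and radius 1/4, and let 𝔖 = ⋃_{i∈ℕ} (i·C̄) ∩ ℕ² where C̄ is the closed disk. With τ₁, τ₂ the two tangent rays from the origin to C̄ and nᵢ the smallest element of 𝔖 on τᵢ, the semigroup 𝔖 satisfies: int(C) = int(𝔖) and 𝔖 ∩ τᵢ = {k nᵢ : k ∈ ℕ} for i = 1,2, where int(C) denotes the lattice points strictly inside the cone and int(𝔖) = 𝔖 minus the points on τ₁ ∪ τ₂; hence 𝔖 satisfies the combinatorial Cohen-Macaulay condition. -/

import Mathlib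

open scoped Pointwise

def toQ (p : ℤ × ℤ) : ℚ × ℚ := ((p.1 : ℚ), (p.2 : ℚ))
def toR (p : ℤ × ℤ) : ℝ × ℝ := ((p.1 : ℝ), (p.2 : ℝ))
def isNat (p : ℤ × ℤ) : Prop := 0 ≤ p.1 ∧ 0 ≤ p.2
def inCone (n₁ n₂ a : ℤ × ℤ) : Prop :=
  ∃ q₁ q₂ : ℚ, 0 ≤ q₁ ∧ 0 ≤ q₂ ∧ toQ a = q₁ • toQ n₁ + q₂ • toQ n₂
def onRay (n a : ℤ × ℤ) : Prop := ∃ q : ℚ, 0 ≤ q ∧ toQ a = q • toQ n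


/-- The closed disk with center `(7/4, 1)` and radius `1/4`. -/
def disk : Set (ℝ × ℝ) :=
  {p : ℝ × ℝ | (p.1 - 7 / 4) ^ 2 + (p.2 - 1) ^ 2 ≤ (1 / 4 : ℝ) ^ 2}

/-- The circle semigroup `𝔖 = ⋃_{i∈ℕ} (i·C̄) ∩ ℕ²`. -/
def circSem : Set (ℤ × ℤ) :=
  {a : ℤ × ℤ | a = 0 ∨ ∃ i : ℕ, toR a ∈ (i : ℝ) • disk}

/-- `a` lies on the real ray through `t`. -/
def onRayR (t : ℝ × ℝ) (a : ℤ × ℤ) : Prop := ∃ r : ℝ, 0 ≤ r ∧ toR a = r • t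

/-- `a` lies in the real cone spanned by `t₁`, `t₂`. -/
def inConeR (t₁ t₂ : ℝ × ℝ) (a : ℤ × ℤ) : Prop :=
  ∃ r₁ r₂ : ℝ, 0 ≤ r₁ ∧ 0 ≤ r₂ ∧ toR a = r₁ • t₁ + r₂ • t₂

set_option maxHeartbeats 1600000

namespace S18

noncomputable def p₁ : ℝ × ℝ := (8/5, 6/5)
noncomputable def p₂ : ℝ × ℝ := (24/13, 10/13)

/-! ### Integer arithmetic core -/

lemma baseNat : ∀ u : Fin 32, ∀ v : Fin 32,
    (v.val + 145) % 16 = (9 * (u.val + 1)) % 16 →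
    ((32*((13*(u.val+1) + 5*(v.val+1)+16)/32) - (13*(u.val+1) + 5*(v.val+1)))
      * (32*((13*(u.val+1) + 5*(v.val+1)+16)/32) - (13*(u.val+1) + 5*(v.val+1)))
      ≤ 4*((u.val+1)*(v.val+1))
    ∧ ((13*(u.val+1) + 5*(v.val+1)) - 32*((13*(u.val+1) + 5*(v.val+1)+16)/32))
      * ((13*(u.val+1) + 5*(v.val+1)) - 32*((13*(u.val+1) + 5*(v.val+1)+16)/32))
      ≤ 4*((u.val+1)*(v.val+1))) := by decide

lemma baseZ (u v : ℤ) (hu1 : 1 ≤ u) (hu : u ≤ 32) (hv1 : 1 ≤ v) (hv : v ≤ 32)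
    (hc : 16 ∣ (v - 9*u)) :
    ∃ i : ℤ, 1 ≤ i ∧ (32*i - (13*u+5*v))^2 ≤ 4*(u*v) := by
  obtain ⟨U, hU⟩ := Int.eq_ofNat_of_zero_le (by omega : (0:ℤ) ≤ u - 1)
  obtain ⟨V, hV⟩ := Int.eq_ofNat_of_zero_le (by omega : (0:ℤ) ≤ v - 1)
  have hU32 : U < 32 := by omega
  have hV32 : V < 32 := by omega
  have hc' : (V + 145) % 16 = (9 * (U + 1)) % 16 := by omega
  obtain ⟨h1, h2⟩ := baseNat ⟨U, hU32⟩ ⟨V, hV32⟩ hc'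
  set m : ℕ := 13*(U+1) + 5*(V+1) with hm
  set i : ℕ := (m + 16)/32 with hi
  refine ⟨(i : ℤ), by omega, ?_⟩
  rcases le_total (32*i) m with hle | hle
  · have hD : (32*(i:ℤ) - (13*u+5*v)) = -((m - 32*i : ℕ) : ℤ) := by push_cast; omega
    rw [hD]
    have h3 : (((m - 32*i) * (m - 32*i) : ℕ) : ℤ) ≤ ((4*((U+1)*(V+1)) : ℕ) : ℤ) := by
      exact_mod_cast h2
    push_cast at h3
    nlinarith [h3]
  · have hD : (32*(i:ℤ) - (13*u+5*v)) = ((32*i - m : ℕ) : ℤ) := by push_cast; omega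
    rw [hD]
    have h3 : (((32*i - m) * (32*i - m) : ℕ) : ℤ) ≤ ((4*((U+1)*(V+1)) : ℕ) : ℤ) := by
      exact_mod_cast h1
    push_cast at h3
    nlinarith [h3]

lemma cover : ∀ n : ℕ, ∀ u v : ℤ, (u + v).toNat ≤ n → 1 ≤ u → 1 ≤ v → 16 ∣ (v - 9*u) →
    ∃ i : ℤ, 1 ≤ i ∧ (32*i - (13*u+5*v))^2 ≤ 4*(u*v) := by
  intro n
  induction n with
  | zero => intro u v h hu hv _; omega
  | succ n ih =>
    intro u v h hu hv hc
    by_cases hv33 : 33 ≤ v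
    · obtain ⟨i, hi1, hi⟩ := ih u (v-32) (by omega) hu (by omega) (by omega)
      refine ⟨i+5, by omega, ?_⟩
      have e : 32*(i+5) - (13*u+5*v) = 32*i - (13*u+5*(v-32)) := by ring
      rw [e]
      nlinarith [hi, hu]
    · by_cases hu33 : 33 ≤ u
      · obtain ⟨i, hi1, hi⟩ := ih (u-32) v (by omega) (by omega) hv (by omega)
        refine ⟨i+13, by omega, ?_⟩
        have e : 32*(i+13) - (13*u+5*v) = 32*i - (13*(u-32)+5*v) := by ring
        rw [e]
        nlinarith [hi, hv]
      · exact baseZ u v hu (by omega) hv (by omega) hc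

lemma quad_nonneg {i u v : ℤ} (hi : 1 ≤ i) (h : (32*i - (13*u+5*v))^2 ≤ 4*(u*v)) :
    0 ≤ u ∧ 0 ≤ v := by
  have huv : 0 ≤ u * v := by nlinarith [sq_nonneg (32*i - (13*u+5*v))]
  rcases le_or_gt 0 u with hu | hu
  · rcases le_or_gt 0 v with hv | hv
    · exact ⟨hu, hv⟩
    · have hu0 : u = 0 := by nlinarith
      subst hu0
      exfalso; nlinarith
  · rcases le_or_gt 0 v with hv | hv
    · have hv0 : v = 0 := by nlinarith
      subst hv0
      exfalso; nlinarith
    · exfalso; nlinarith [sq_nonneg (32*i - (13*u+5*v)), mul_pos (neg_pos.2 hu) (neg_pos.2 hv)]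

/-! ### Tangent points -/

lemma tangent_eq {t : ℝ × ℝ}
    (h : {x : ℝ × ℝ | x ∈ disk ∧ ∃ r : ℝ, 0 ≤ r ∧ x = r • t} = {t}) :
    t = p₁ ∨ t = p₂ := by
  rw [Set.ext_iff] at h
  obtain ⟨a, b⟩ := t
  obtain ⟨hd, -⟩ := (h (a, b)).mpr rfl
  have hdisk : (a - 7/4)^2 + (b - 1)^2 ≤ (1/4:ℝ)^2 := hd
  have ha32 : (3/2:ℝ) ≤ a := by nlinarith [sq_nonneg (b-1)]
  have hb34 : (3/4:ℝ) ≤ b := by nlinarith [sq_nonneg (a-7/4)]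
  have uniq : ∀ r : ℝ, 0 ≤ r → (r*a - 7/4)^2 + (r*b - 1)^2 ≤ (1/4:ℝ)^2 → r = 1 := by
    intro r hr hmem
    have hx : (r*a, r*b) ∈ disk := hmem
    have heq : (r*a, r*b) = (a, b) :=
      (h (r*a, r*b)).mp ⟨hx, r, hr, by simp [Prod.smul_def, smul_eq_mul]⟩
    have h1 : r * a = a := congrArg Prod.fst heq
    have h2 : (r - 1) * a = 0 := by linarith [h1]
    rcases mul_eq_zero.mp h2 with h' | h'
    · linarith
    · linarith
  have hApos : (0:ℝ) < a^2 + b^2 := by nlinarith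
  have hAB : (a^2+b^2) + 4 ≤ 7*a/2 + 2*b := by nlinarith [hdisk]
  have hBpos : (0:ℝ) < 7*a/2 + 2*b := by nlinarith
  have hr₀ : (7*a/2 + 2*b) / (2*(a^2+b^2)) = 1 := by
    apply uniq
    · positivity
    · have key : 16*(a^2+b^2) ≤ (7*a/2 + 2*b)^2 := by nlinarith [sq_nonneg (a^2+b^2 - 4)]
      have e1 : (7*a/2+2*b)/(2*(a^2+b^2))*a - 7/4
          = ((7*a/2+2*b)*a - 7/2*(a^2+b^2))/(2*(a^2+b^2)) := by field_simp; ring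
      have e2 : (7*a/2+2*b)/(2*(a^2+b^2))*b - 1
          = ((7*a/2+2*b)*b - 2*(a^2+b^2))/(2*(a^2+b^2)) := by field_simp
      rw [e1, e2, div_pow, div_pow, ← add_div, div_le_iff₀ (by positivity)]
      have expand : ((7*a/2+2*b)*a - 7/2*(a^2+b^2))^2 + ((7*a/2+2*b)*b - 2*(a^2+b^2))^2
          = 16*(a^2+b^2)^2 - (a^2+b^2)*(7*a/2+2*b)^2 + (a^2+b^2)^2/4 := by ring
      rw [expand]
      have e3 : (1/4:ℝ)^2 * (2*(a^2+b^2))^2 = (a^2+b^2)^2/4 := by ring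
      rw [e3]
      nlinarith [mul_nonneg (le_of_lt hApos) (sub_nonneg.2 key)]
  have hB2A : 7*a/2 + 2*b = 2*(a^2+b^2) := by
    field_simp at hr₀; linarith
  have hA4 : 4 ≤ a^2+b^2 := by nlinarith
  have hAle : a^2+b^2 ≤ 4 := by
    have hsnn : 0 ≤ Real.sqrt ((a^2+b^2-4)/(a^2+b^2)) := Real.sqrt_nonneg _
    have hdnn : 0 ≤ (a^2+b^2-4)/(a^2+b^2) := div_nonneg (by linarith) (by linarith)
    have hss : Real.sqrt ((a^2+b^2-4)/(a^2+b^2))^2 = (a^2+b^2-4)/(a^2+b^2) :=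
      Real.sq_sqrt hdnn
    set s := Real.sqrt ((a^2+b^2-4)/(a^2+b^2)) with hs
    have hv : (a^2+b^2)*s^2 - (a^2+b^2-4) = 0 := by
      rw [hss]; field_simp; ring
    have hmem : ((1+s)*a - 7/4)^2 + ((1+s)*b - 1)^2 ≤ (1/4:ℝ)^2 :=
      le_of_eq (by linear_combination hv - (1+s)*hB2A)
    have h1s := uniq (1+s) (by linarith) hmem
    have hs0 : s = 0 := by linarith
    have hz : (a^2+b^2-4)/(a^2+b^2) = 0 := by rw [← hss, hs0]; ring
    rcases div_eq_zero_iff.mp hz with h' | h'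
    · linarith
    · linarith
  have hA4' : a^2 + b^2 = 4 := le_antisymm hAle hA4
  have hBeq : 7*a/2 + 2*b = 8 := by rw [hB2A, hA4']; ring
  have hfact : (5*a - 8)*(13*a - 24) = 0 := by
    linear_combination 16*hA4' + (14*a - 8*b - 32)*hBeq
  rcases mul_eq_zero.mp hfact with h' | h'
  · left
    have ha' : a = 8/5 := by linarith
    have hb' : b = 6/5 := by rw [ha'] at hBeq; linarith
    rw [ha', hb']; rfl
  · right
    have ha' : a = 24/13 := by linarith
    have hb' : b = 10/13 := by rw [ha'] at hBeq; linarith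
    rw [ha', hb']; rfl

/-! ### Membership criterion -/

lemma disk_nonempty : disk.Nonempty := ⟨(7/4, 1), by simp [disk]⟩

lemma mem_smul_disk {i : ℕ} (hi : 1 ≤ i) {a : ℤ × ℤ} :
    toR a ∈ (i : ℝ) • disk ↔
      (32*(i:ℤ) - (13*(3*a.1-4*a.2)+5*(12*a.2-5*a.1)))^2
        ≤ 4*((3*a.1-4*a.2)*(12*a.2-5*a.1)) := by
  have hipos : (0:ℝ) < (i:ℝ) := by exact_mod_cast hi
  constructor
  · rintro ⟨d, hd, hda⟩
    have hd' : (d.1 - 7/4)^2 + (d.2 - 1)^2 ≤ (1/4:ℝ)^2 := hd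
    have hx : (a.1 : ℝ) = (i:ℝ) * d.1 := congrArg Prod.fst hda.symm
    have hy : (a.2 : ℝ) = (i:ℝ) * d.2 := congrArg Prod.snd hda.symm
    have key : (32*(i:ℝ) - (13*(3*(a.1:ℝ)-4*(a.2:ℝ))+5*(12*(a.2:ℝ)-5*(a.1:ℝ))))^2
        ≤ 4*((3*(a.1:ℝ)-4*(a.2:ℝ))*(12*(a.2:ℝ)-5*(a.1:ℝ))) := by
      rw [hx, hy]
      nlinarith [mul_le_mul_of_nonneg_left hd' (by positivity : (0:ℝ) ≤ 256*(i:ℝ)^2)]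
    exact_mod_cast key
  · intro h
    have key : (32*(i:ℝ) - (13*(3*(a.1:ℝ)-4*(a.2:ℝ))+5*(12*(a.2:ℝ)-5*(a.1:ℝ))))^2
        ≤ 4*((3*(a.1:ℝ)-4*(a.2:ℝ))*(12*(a.2:ℝ)-5*(a.1:ℝ))) := by exact_mod_cast h
    refine ⟨((a.1:ℝ)/(i:ℝ), (a.2:ℝ)/(i:ℝ)), ?_, ?_⟩
    · show ((a.1:ℝ)/(i:ℝ) - 7/4)^2 + ((a.2:ℝ)/(i:ℝ) - 1)^2 ≤ (1/4:ℝ)^2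
      have e1 : (a.1:ℝ)/(i:ℝ) - 7/4 = ((a.1:ℝ) - 7/4*(i:ℝ))/(i:ℝ) := by field_simp
      have e2 : (a.2:ℝ)/(i:ℝ) - 1 = ((a.2:ℝ) - (i:ℝ))/(i:ℝ) := by field_simp
      rw [e1, e2, div_pow, div_pow, ← add_div, div_le_iff₀ (by positivity)]
      nlinarith [key]
    · show ((i:ℝ)) • ((a.1:ℝ)/(i:ℝ), (a.2:ℝ)/(i:ℝ)) = toR a
      have e1 : (i:ℝ) * ((a.1:ℝ)/(i:ℝ)) = (a.1:ℝ) := by field_simp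
      have e2 : (i:ℝ) * ((a.2:ℝ)/(i:ℝ)) = (a.2:ℝ) := by field_simp
      simp only [Prod.smul_def, smul_eq_mul, e1, e2, toR]

lemma toR_eq_zero {a : ℤ × ℤ} (h : toR a = 0) : a = 0 := by
  have h1 : (a.1 : ℝ) = 0 := congrArg Prod.fst h
  have h2 : (a.2 : ℝ) = 0 := congrArg Prod.snd h
  have e1 : a.1 = 0 := by exact_mod_cast h1
  have e2 : a.2 = 0 := by exact_mod_cast h2
  exact Prod.ext e1 e2

lemma mem_circSem {a : ℤ × ℤ} :
    a ∈ circSem ↔ a = 0 ∨ ∃ i : ℤ, 1 ≤ i ∧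
      (32*i - (13*(3*a.1-4*a.2)+5*(12*a.2-5*a.1)))^2
        ≤ 4*((3*a.1-4*a.2)*(12*a.2-5*a.1)) := by
  constructor
  · rintro (h | ⟨i, hi⟩)
    · exact Or.inl h
    · rcases Nat.eq_zero_or_pos i with h0 | h1
      · subst h0
        left
        rw [Nat.cast_zero, Set.zero_smul_set disk_nonempty, Set.mem_zero] at hi
        exact toR_eq_zero hi
      · right
        exact ⟨(i:ℤ), by exact_mod_cast h1, (mem_smul_disk h1).mp hi⟩
  · rintro (h | ⟨i, hi1, hi⟩)
    · exact Or.inl h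
    · right
      refine ⟨i.toNat, ?_⟩
      have h1 : 1 ≤ i.toNat := by omega
      rw [mem_smul_disk h1]
      have e : (i.toNat : ℤ) = i := by omega
      rw [e]
      exact hi

/-! ### Rays -/

lemma ray_zero (t : ℝ × ℝ) : onRayR t 0 :=
  ⟨0, le_refl 0, by simp [toR, Prod.ext_iff]⟩

lemma ray1_iff {a : ℤ × ℤ} : onRayR p₁ a ↔ (3*a.1 = 4*a.2 ∧ 0 ≤ a.1) := by
  constructor
  · rintro ⟨r, hr, heq⟩
    simp only [toR, p₁, Prod.smul_def, smul_eq_mul, Prod.ext_iff] at heq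
    obtain ⟨h1, h2⟩ := heq
    constructor
    · have : 3*(a.1:ℝ) = 4*(a.2:ℝ) := by rw [h1, h2]; ring
      exact_mod_cast this
    · have : (0:ℝ) ≤ (a.1:ℝ) := by rw [h1]; positivity
      exact_mod_cast this
  · rintro ⟨h3, hx⟩
    have hx' : (0:ℝ) ≤ (a.1:ℝ) := by exact_mod_cast hx
    have h3' : 3*(a.1:ℝ) = 4*(a.2:ℝ) := by exact_mod_cast h3
    refine ⟨(a.1:ℝ)*5/8, by linarith, ?_⟩
    simp only [toR, p₁, Prod.smul_def, smul_eq_mul, Prod.ext_iff]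
    constructor
    · ring
    · linarith
  
lemma ray2_iff {a : ℤ × ℤ} : onRayR p₂ a ↔ (5*a.1 = 12*a.2 ∧ 0 ≤ a.1) := by
  constructor
  · rintro ⟨r, hr, heq⟩
    simp only [toR, p₂, Prod.smul_def, smul_eq_mul, Prod.ext_iff] at heq
    obtain ⟨h1, h2⟩ := heq
    constructor
    · have : 5*(a.1:ℝ) = 12*(a.2:ℝ) := by rw [h1, h2]; ring
      exact_mod_cast this
    · have : (0:ℝ) ≤ (a.1:ℝ) := by rw [h1]; positivity
      exact_mod_cast this
  · rintro ⟨h3, hx⟩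
    have hx' : (0:ℝ) ≤ (a.1:ℝ) := by exact_mod_cast hx
    have h3' : 5*(a.1:ℝ) = 12*(a.2:ℝ) := by exact_mod_cast h3
    refine ⟨(a.1:ℝ)*13/24, by linarith, ?_⟩
    simp only [toR, p₂, Prod.smul_def, smul_eq_mul, Prod.ext_iff]
    constructor
    · ring
    · linarith

lemma memray1 {a : ℤ × ℤ} (h3 : 3*a.1 = 4*a.2) (hx : 0 ≤ a.1) :
    a ∈ circSem ↔ ∃ k : ℕ, a = ((8*(k:ℤ)), (6*(k:ℤ))) := by
  rw [mem_circSem]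
  constructor
  · rintro (h0 | ⟨i, hi1, hi⟩)
    · exact ⟨0, by rw [h0]; simp; rfl⟩
    · have hu : 3*a.1 - 4*a.2 = 0 := by omega
      have key : (32*i - (13*(3*a.1-4*a.2)+5*(12*a.2-5*a.1)))^2 ≤ 0 := by
        calc (32*i - (13*(3*a.1-4*a.2)+5*(12*a.2-5*a.1)))^2
            ≤ 4*((3*a.1-4*a.2)*(12*a.2-5*a.1)) := hi
          _ = 0 := by rw [hu]; ring
      have hz : 32*i - (13*(3*a.1-4*a.2)+5*(12*a.2-5*a.1)) = 0 :=
        pow_eq_zero_iff two_ne_zero |>.mp (le_antisymm key (sq_nonneg _))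
      refine ⟨(a.1/8).toNat, ?_⟩
      have h8 : 8 ∣ a.1 := by omega
      refine Prod.ext ?_ ?_ <;> simp <;> omega
  · rintro ⟨k, rfl⟩
    rcases Nat.eq_zero_or_pos k with h0 | h1
    · subst h0; left; simp
    · right
      refine ⟨5*(k:ℤ), by omega, ?_⟩
      have e : (32*(5*(k:ℤ)) - (13*(3*(8*(k:ℤ))-4*(6*(k:ℤ)))+5*(12*(6*(k:ℤ))-5*(8*(k:ℤ)))))^2
          = 0 := by ring
      rw [e]
      exact le_of_eq (by ring)

lemma memray2 {a : ℤ × ℤ} (h3 : 5*a.1 = 12*a.2) (hx : 0 ≤ a.1) :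
    a ∈ circSem ↔ ∃ k : ℕ, a = ((24*(k:ℤ)), (10*(k:ℤ))) := by
  rw [mem_circSem]
  constructor
  · rintro (h0 | ⟨i, hi1, hi⟩)
    · exact ⟨0, by rw [h0]; simp; rfl⟩
    · have hv : 12*a.2 - 5*a.1 = 0 := by omega
      have key : (32*i - (13*(3*a.1-4*a.2)+5*(12*a.2-5*a.1)))^2 ≤ 0 := by
        calc (32*i - (13*(3*a.1-4*a.2)+5*(12*a.2-5*a.1)))^2
            ≤ 4*((3*a.1-4*a.2)*(12*a.2-5*a.1)) := hi
          _ = 0 := by rw [hv]; ring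
      have hz : 32*i - (13*(3*a.1-4*a.2)+5*(12*a.2-5*a.1)) = 0 :=
        pow_eq_zero_iff two_ne_zero |>.mp (le_antisymm key (sq_nonneg _))
      refine ⟨(a.1/24).toNat, ?_⟩
      refine Prod.ext ?_ ?_ <;> simp <;> omega
  · rintro ⟨k, rfl⟩
    rcases Nat.eq_zero_or_pos k with h0 | h1
    · subst h0; left; simp
    · right
      refine ⟨13*(k:ℤ), by omega, ?_⟩
      have e : (32*(13*(k:ℤ)) -
          (13*(3*(24*(k:ℤ))-4*(10*(k:ℤ)))+5*(12*(10*(k:ℤ))-5*(24*(k:ℤ)))))^2 = 0 := by ring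
      rw [e]
      exact le_of_eq (by ring)

lemma coneSwap {t s : ℝ × ℝ} {a : ℤ × ℤ} : inConeR t s a ↔ inConeR s t a := by
  constructor <;> rintro ⟨r₁, r₂, h1, h2, h⟩ <;> exact ⟨r₂, r₁, h2, h1, by rw [h, add_comm]⟩

lemma cone_nonneg {a : ℤ × ℤ} (h : inConeR p₁ p₂ a) :
    0 ≤ 3*a.1 - 4*a.2 ∧ 0 ≤ 12*a.2 - 5*a.1 := by
  obtain ⟨r₁, r₂, hr₁, hr₂, heq⟩ := h
  simp only [toR, p₁, p₂, Prod.smul_def, smul_eq_mul, Prod.ext_iff, Prod.fst_add,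
    Prod.snd_add] at heq
  obtain ⟨h1, h2⟩ := heq
  constructor
  · have : (0:ℝ) ≤ 3*(a.1:ℝ) - 4*(a.2:ℝ) := by rw [h1, h2]; linarith
    exact_mod_cast this
  · have : (0:ℝ) ≤ 12*(a.2:ℝ) - 5*(a.1:ℝ) := by rw [h1, h2]; linarith
    exact_mod_cast this

lemma interior_mem {a : ℤ × ℤ} (hu : 1 ≤ 3*a.1 - 4*a.2) (hv : 1 ≤ 12*a.2 - 5*a.1) :
    a ∈ circSem := by
  obtain ⟨i, hi1, hi⟩ := cover ((3*a.1 - 4*a.2) + (12*a.2 - 5*a.1)).toNat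
    (3*a.1 - 4*a.2) (12*a.2 - 5*a.1) le_rfl hu hv (by omega)
  exact mem_circSem.mpr (Or.inr ⟨i, hi1, hi⟩)

lemma cone_of_sem {a : ℤ × ℤ} (hu : 0 ≤ 3*a.1 - 4*a.2) (hv : 0 ≤ 12*a.2 - 5*a.1) :
    inConeR p₁ p₂ a := by
  have hu' : (0:ℝ) ≤ 3*(a.1:ℝ) - 4*(a.2:ℝ) := by exact_mod_cast hu
  have hv' : (0:ℝ) ≤ 12*(a.2:ℝ) - 5*(a.1:ℝ) := by exact_mod_cast hv
  refine ⟨5*(12*(a.2:ℝ) - 5*(a.1:ℝ))/32, 13*(3*(a.1:ℝ) - 4*(a.2:ℝ))/32,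
    by linarith, by linarith, ?_⟩
  simp only [toR, p₁, p₂, Prod.smul_def, smul_eq_mul, Prod.ext_iff, Prod.fst_add,
    Prod.snd_add]
  constructor <;> ring

/-! ### Master lemma -/

lemma master (n₁ n₂ : ℤ × ℤ) (hn₁0 : n₁ ≠ 0) (hn₂0 : n₂ ≠ 0)
    (hn₁S : n₁ ∈ circSem) (hn₂S : n₂ ∈ circSem)
    (hn₁τ : onRayR p₁ n₁) (hn₂τ : onRayR p₂ n₂)
    (hmin₁ : ∀ a ∈ circSem, a ≠ 0 → onRayR p₁ a → ∃ r : ℝ, 1 ≤ r ∧ toR a = r • toR n₁)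
    (hmin₂ : ∀ a ∈ circSem, a ≠ 0 → onRayR p₂ a → ∃ r : ℝ, 1 ≤ r ∧ toR a = r • toR n₂) :
    (∀ a : ℤ × ℤ,
      (isNat a ∧ inConeR p₁ p₂ a ∧ ¬ onRayR p₁ a ∧ ¬ onRayR p₂ a) ↔
      (a ∈ circSem ∧ ¬ onRayR p₁ a ∧ ¬ onRayR p₂ a)) ∧
    (∀ a : ℤ × ℤ, (a ∈ circSem ∧ onRayR p₁ a) ↔ ∃ k : ℕ, a = k • n₁) ∧
    (∀ a : ℤ × ℤ, (a ∈ circSem ∧ onRayR p₂ a) ↔ ∃ k : ℕ, a = k • n₂) ∧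
    (∀ a : ℤ × ℤ, isNat a → inConeR p₁ p₂ a → a ∉ circSem →
      (a + n₁ ∉ circSem ∨ a + n₂ ∉ circSem)) := by
  -- identify n₁
  obtain ⟨h3n₁, hxn₁⟩ := ray1_iff.mp hn₁τ
  obtain ⟨k₁, hk₁⟩ := (memray1 h3n₁ hxn₁).mp hn₁S
  have hk₁1 : 1 ≤ k₁ := by
    rcases Nat.eq_zero_or_pos k₁ with h0 | h1
    · exfalso; apply hn₁0; rw [hk₁, h0]; simp
    · exact h1
  have h86S : ((8:ℤ), (6:ℤ)) ∈ circSem := by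
    rw [memray1 (by norm_num) (by norm_num)]
    exact ⟨1, by norm_num⟩
  have h86τ : onRayR p₁ ((8:ℤ), (6:ℤ)) := ray1_iff.mpr ⟨by norm_num, by norm_num⟩
  obtain ⟨r, hr1, hreq⟩ := hmin₁ ((8:ℤ), (6:ℤ)) h86S (by simp) h86τ
  rw [hk₁] at hreq
  simp only [toR, Prod.smul_def, smul_eq_mul, Prod.ext_iff] at hreq
  obtain ⟨hre, -⟩ := hreq
  push_cast at hre
  have hk₁eq : k₁ = 1 := by
    by_contra hne
    have h2 : 2 ≤ k₁ := by omega
    have h2' : (2:ℝ) ≤ (k₁:ℝ) := by exact_mod_cast h2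
    nlinarith [hre, hr1, h2']
  have hn₁ : n₁ = ((8:ℤ), (6:ℤ)) := by rw [hk₁, hk₁eq]; norm_num
  -- identify n₂
  obtain ⟨h3n₂, hxn₂⟩ := ray2_iff.mp hn₂τ
  obtain ⟨k₂, hk₂⟩ := (memray2 h3n₂ hxn₂).mp hn₂S
  have hk₂1 : 1 ≤ k₂ := by
    rcases Nat.eq_zero_or_pos k₂ with h0 | h1
    · exfalso; apply hn₂0; rw [hk₂, h0]; simp
    · exact h1
  have h2410S : ((24:ℤ), (10:ℤ)) ∈ circSem := by
    rw [memray2 (by norm_num) (by norm_num)]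
    exact ⟨1, by norm_num⟩
  have h2410τ : onRayR p₂ ((24:ℤ), (10:ℤ)) := ray2_iff.mpr ⟨by norm_num, by norm_num⟩
  obtain ⟨r', hr1', hreq'⟩ := hmin₂ ((24:ℤ), (10:ℤ)) h2410S (by simp) h2410τ
  rw [hk₂] at hreq'
  simp only [toR, Prod.smul_def, smul_eq_mul, Prod.ext_iff] at hreq'
  obtain ⟨hre', -⟩ := hreq'
  push_cast at hre'
  have hk₂eq : k₂ = 1 := by
    by_contra hne
    have h2 : 2 ≤ k₂ := by omega
    have h2' : (2:ℝ) ≤ (k₂:ℝ) := by exact_mod_cast h2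
    nlinarith [hre', hr1', h2']
  have hn₂ : n₂ = ((24:ℤ), (10:ℤ)) := by rw [hk₂, hk₂eq]; norm_num
  subst hn₁ hn₂
  refine ⟨?_, ?_, ?_, ?_⟩
  · -- int C = int S
    intro a
    constructor
    · rintro ⟨⟨hx, hy⟩, hcone, hnr₁, hnr₂⟩
      obtain ⟨hu, hv⟩ := cone_nonneg hcone
      have hu1 : 1 ≤ 3*a.1 - 4*a.2 := by
        rcases eq_or_lt_of_le hu with h0 | h1
        · exfalso; exact hnr₁ (ray1_iff.mpr ⟨by omega, hx⟩)
        · omega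
      have hv1 : 1 ≤ 12*a.2 - 5*a.1 := by
        rcases eq_or_lt_of_le hv with h0 | h1
        · exfalso; exact hnr₂ (ray2_iff.mpr ⟨by omega, hx⟩)
        · omega
      exact ⟨interior_mem hu1 hv1, hnr₁, hnr₂⟩
    · rintro ⟨hmem, hnr₁, hnr₂⟩
      rcases mem_circSem.mp hmem with h0 | ⟨i, hi1, hi⟩
      · exfalso; exact hnr₁ (h0 ▸ ray_zero p₁)
      · obtain ⟨hu, hv⟩ := quad_nonneg hi1 hi
        exact ⟨⟨by omega, by omega⟩, cone_of_sem hu hv, hnr₁, hnr₂⟩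
  · -- S ∩ τ₁
    intro a
    have smul_eq : ∀ k : ℕ, (k • ((8:ℤ), (6:ℤ)) : ℤ × ℤ) = ((8*(k:ℤ)), (6*(k:ℤ))) := by
      intro k
      refine Prod.ext ?_ ?_ <;> simp [Prod.smul_def, nsmul_eq_mul] <;> ring
    constructor
    · rintro ⟨hmem, hray⟩
      obtain ⟨h3, hx⟩ := ray1_iff.mp hray
      obtain ⟨k, hk⟩ := (memray1 h3 hx).mp hmem
      exact ⟨k, by rw [hk, smul_eq]⟩
    · rintro ⟨k, rfl⟩
      rw [smul_eq]
      refine ⟨(memray1 (by ring) (by positivity)).mpr ⟨k, rfl⟩, ?_⟩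
      exact ray1_iff.mpr ⟨by ring, by positivity⟩
  · -- S ∩ τ₂
    intro a
    have smul_eq : ∀ k : ℕ, (k • ((24:ℤ), (10:ℤ)) : ℤ × ℤ) = ((24*(k:ℤ)), (10*(k:ℤ))) := by
      intro k
      refine Prod.ext ?_ ?_ <;> simp [Prod.smul_def, nsmul_eq_mul] <;> ring
    constructor
    · rintro ⟨hmem, hray⟩
      obtain ⟨h3, hx⟩ := ray2_iff.mp hray
      obtain ⟨k, hk⟩ := (memray2 h3 hx).mp hmem
      exact ⟨k, by rw [hk, smul_eq]⟩
    · rintro ⟨k, rfl⟩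
      rw [smul_eq]
      refine ⟨(memray2 (by ring) (by positivity)).mpr ⟨k, rfl⟩, ?_⟩
      exact ray2_iff.mpr ⟨by ring, by positivity⟩
  · -- C-M condition
    rintro a ⟨hx, hy⟩ hcone hnot
    obtain ⟨hu, hv⟩ := cone_nonneg hcone
    rcases eq_or_lt_of_le hu with hu0 | hu1
    · -- a on ray τ₁
      left
      intro hmem'
      have h3' : 3*(a + ((8:ℤ),(6:ℤ))).1 = 4*(a + ((8:ℤ),(6:ℤ))).2 := by
        simp only [Prod.fst_add, Prod.snd_add]; omega
      have hx' : 0 ≤ (a + ((8:ℤ),(6:ℤ))).1 := by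
        simp only [Prod.fst_add]; omega
      obtain ⟨k, hk⟩ := (memray1 h3' hx').mp hmem'
      apply hnot
      rw [memray1 (by omega) hx]
      have hk1 : (a + ((8:ℤ),(6:ℤ))).1 = 8*(k:ℤ) := by rw [hk]
      have hk2 : (a + ((8:ℤ),(6:ℤ))).2 = 6*(k:ℤ) := by rw [hk]
      simp only [Prod.fst_add, Prod.snd_add] at hk1 hk2
      have hk1' : 1 ≤ k := by omega
      refine ⟨k - 1, ?_⟩
      refine Prod.ext ?_ ?_ <;> simp <;> push_cast <;> omega
    · rcases eq_or_lt_of_le hv with hv0 | hv1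
      · -- a on ray τ₂
        right
        intro hmem'
        have h3' : 5*(a + ((24:ℤ),(10:ℤ))).1 = 12*(a + ((24:ℤ),(10:ℤ))).2 := by
          simp only [Prod.fst_add, Prod.snd_add]; omega
        have hx' : 0 ≤ (a + ((24:ℤ),(10:ℤ))).1 := by
          simp only [Prod.fst_add]; omega
        obtain ⟨k, hk⟩ := (memray2 h3' hx').mp hmem'
        apply hnot
        rw [memray2 (by omega) hx]
        have hk1 : (a + ((24:ℤ),(10:ℤ))).1 = 24*(k:ℤ) := by rw [hk]
        have hk2 : (a + ((24:ℤ),(10:ℤ))).2 = 10*(k:ℤ) := by rw [hk]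
        simp only [Prod.fst_add, Prod.snd_add] at hk1 hk2
        have hk1' : 1 ≤ k := by omega
        refine ⟨k - 1, ?_⟩
        refine Prod.ext ?_ ?_ <;> simp <;> push_cast <;> omega
      · exact absurd (interior_mem (by omega) (by omega)) hnot

end S18

/-- Figure 1 example: for the circle with center `(7/4,1)` and radius `1/4`, with `τ₁, τ₂`
the tangent rays from the origin (touching the disk at `t₁, t₂`) and `nᵢ` the smallest
element of `𝔖` on `τᵢ`, one has `int(C) = int(𝔖)` and `𝔖 ∩ τᵢ = ⟨nᵢ⟩`; hence `𝔖`
satisfies the combinatorial Cohen-Macaulay condition. -/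
theorem stmt18 (t₁ t₂ : ℝ × ℝ) (htne : t₁ ≠ t₂)
    -- each tangent ray meets the disk in exactly the tangent point
    (htan₁ : {x : ℝ × ℝ | x ∈ disk ∧ ∃ r : ℝ, 0 ≤ r ∧ x = r • t₁} = {t₁})
    (htan₂ : {x : ℝ × ℝ | x ∈ disk ∧ ∃ r : ℝ, 0 ≤ r ∧ x = r • t₂} = {t₂})
    (n₁ n₂ : ℤ × ℤ) (hn₁0 : n₁ ≠ 0) (hn₂0 : n₂ ≠ 0)
    (hn₁S : n₁ ∈ circSem) (hn₂S : n₂ ∈ circSem)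
    (hn₁τ : onRayR t₁ n₁) (hn₂τ : onRayR t₂ n₂)
    -- nᵢ is the element of 𝔖 ∩ τᵢ of smallest module
    (hmin₁ : ∀ a ∈ circSem, a ≠ 0 → onRayR t₁ a → ∃ r : ℝ, 1 ≤ r ∧ toR a = r • toR n₁)
    (hmin₂ : ∀ a ∈ circSem, a ≠ 0 → onRayR t₂ a → ∃ r : ℝ, 1 ≤ r ∧ toR a = r • toR n₂) :
    (∀ a : ℤ × ℤ,
      (isNat a ∧ inConeR t₁ t₂ a ∧ ¬ onRayR t₁ a ∧ ¬ onRayR t₂ a) ↔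
      (a ∈ circSem ∧ ¬ onRayR t₁ a ∧ ¬ onRayR t₂ a)) ∧
    (∀ a : ℤ × ℤ, (a ∈ circSem ∧ onRayR t₁ a) ↔ ∃ k : ℕ, a = k • n₁) ∧
    (∀ a : ℤ × ℤ, (a ∈ circSem ∧ onRayR t₂ a) ↔ ∃ k : ℕ, a = k • n₂) ∧
    (∀ a : ℤ × ℤ, isNat a → inConeR t₁ t₂ a → a ∉ circSem →
      (a + n₁ ∉ circSem ∨ a + n₂ ∉ circSem)) := by

  rcases S18.tangent_eq htan₁ with h1 | h1 <;> rcases S18.tangent_eq htan₂ with h2 | h2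
  · exact absurd (h1.trans h2.symm) htne
  · subst h1; subst h2
    exact S18.master n₁ n₂ hn₁0 hn₂0 hn₁S hn₂S hn₁τ hn₂τ hmin₁ hmin₂
  · subst h1; subst h2
    obtain ⟨B1, B2, B3, B4⟩ :=
      S18.master n₂ n₁ hn₂0 hn₁0 hn₂S hn₁S hn₂τ hn₁τ hmin₂ hmin₁
    refine ⟨?_, B3, B2, ?_⟩
    · intro a
      constructor
      · rintro ⟨hnat, hcone, hr1, hr2⟩
        obtain ⟨hmem, -, -⟩ := (B1 a).mp ⟨hnat, S18.coneSwap.mp hcone, hr2, hr1⟩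
        exact ⟨hmem, hr1, hr2⟩
      · rintro ⟨hmem, hr1, hr2⟩
        obtain ⟨hnat, hcone, -, -⟩ := (B1 a).mpr ⟨hmem, hr2, hr1⟩
        exact ⟨hnat, S18.coneSwap.mp hcone, hr1, hr2⟩
    · intro a hnat hcone hnot
      exact (B4 a hnat (S18.coneSwap.mp hcone) hnot).symm
  · exact absurd (h1.trans h2.symm) htne
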